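/- Let G = (V,E) be a finite connected undirected graph and let S and T be any two placements of m pebbles on G. Then there exists a permutation σ of Fin m and a pebble path from S to T ∘ σ. -/

import Mathlib

/-- A single pebble move on a graph `G`: both `P` and `P'` are placements
(injective maps), and exactly one pebble moves along an edge of `G` while all
other pebbles remain stationary (the separation rule). -/
def PebbleMove {V : Type*} {ι : Type*} (G : SimpleGraph V) (P P' : ι → V) : Prop :=
  Function.Injective P ∧ Function.Injective P' ∧
    ∃ i : ι, G.Adj (P i) (P' i) ∧ ∀ j : ι, j ≠ i → P j = P' j

/-- A pebble path from `S` to `T`: a finite sequence of placements starting at `S`,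
ending at `T`, each consecutive pair related by a single pebble move. -/
def PebblePath {V : Type*} {ι : Type*} (G : SimpleGraph V) (S T : ι → V) : Prop :=
  Relation.ReflTransGen (PebbleMove G) S T

/-- Two placements have the same signature: every connected component of `G`
contains the same number of pebbles of each. -/
def SameSignature {V ι κ : Type*} (G : SimpleGraph V) (S : ι → V) (T : κ → V) : Prop :=
  ∀ K : G.ConnectedComponent,
    Nat.card {i : ι // G.connectedComponentMk (S i) = K} =
    Nat.card {j : κ // G.connectedComponentMk (T j) = K}

section Aux

universe u w
variable {V : Type u}

lemma exists_adj_dist {G : SimpleGraph V} (hG : G.Connected) {a b : V} {k : ℕ}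
    (h : G.dist a b = k + 1) : ∃ c, G.Adj a c ∧ G.dist c b = k := by
  obtain ⟨p, hp⟩ := hG.exists_walk_length_eq_dist a b
  rw [h] at hp
  cases p with
  | nil => simp at hp
  | cons hadj q =>
    rename_i c
    refine ⟨c, hadj, le_antisymm ?_ ?_⟩
    · calc G.dist c b ≤ q.length := SimpleGraph.dist_le q
        _ = k := by simpa using hp
    · have ht := hG.dist_triangle (u := a) (v := c) (w := b)
      have h1 : G.dist a c ≤ 1 := by simpa using SimpleGraph.dist_le hadj.toWalk
      omega

lemma pebbleMove_update {ι : Type w} [DecidableEq ι] {G : SimpleGraph V} {S : ι → V}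
    (hS : Function.Injective S) {i : ι} {c : V} (hadj : G.Adj (S i) c)
    (hc : c ∉ Set.range S) : PebbleMove G S (Function.update S i c) := by
  have hinj : Function.Injective (Function.update S i c) := by
    intro a b hab
    by_cases ha : a = i <;> by_cases hb : b = i
    · exact ha.trans hb.symm
    · rw [ha, Function.update_self, Function.update_of_ne hb] at hab
      exact absurd ⟨b, hab.symm⟩ hc
    · rw [hb, Function.update_self, Function.update_of_ne ha] at hab
      exact absurd ⟨a, hab⟩ hc
    · rw [Function.update_of_ne ha, Function.update_of_ne hb] at hab
      exact hS hab
  exact ⟨hS, hinj, i, by simpa using hadj, fun j hj => (Function.update_of_ne hj _ _).symm⟩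

lemma fill' {ι : Type w} [Finite ι] {G : SimpleGraph V} (hG : G.Connected) (v : V) :
    ∀ (d : ℕ) (S : ι → V), Function.Injective S → ∀ i : ι, G.dist (S i) v ≤ d →
      (∀ j, G.dist (S i) v ≤ G.dist (S j) v) →
      ∃ S', PebblePath G S S' ∧ Function.Injective S' ∧ ∃ k, S' k = v := by
  classical
  intro d
  induction d with
  | zero =>
    intro S hS i hd _
    exact ⟨S, .refl, hS, i, hG.dist_eq_zero_iff.mp (Nat.le_zero.mp hd)⟩
  | succ d ih =>
    intro S hS i hd hmin
    rcases Nat.eq_zero_or_pos (G.dist (S i) v) with h0 | hpos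
    · exact ⟨S, .refl, hS, i, hG.dist_eq_zero_iff.mp h0⟩
    · obtain ⟨k, hk⟩ : ∃ k, G.dist (S i) v = k + 1 := ⟨_, (Nat.succ_pred_eq_of_pos hpos).symm⟩
      obtain ⟨c, hadj, hc⟩ := exists_adj_dist hG hk
      have hcr : c ∉ Set.range S := by
        rintro ⟨j, rfl⟩
        have := hmin j
        omega
      have hmove := pebbleMove_update hS hadj hcr
      have hS₂i : Function.update S i c i = c := Function.update_self ..
      obtain ⟨S', hpath, hinj, hk'⟩ := ih (Function.update S i c) hmove.2.1 i
        (by rw [hS₂i, hc]; omega)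
        (fun j => by
          rcases eq_or_ne j i with rfl | hj
          · exact le_refl _
          · rw [hS₂i, Function.update_of_ne hj]
            have := hmin j
            omega)
      exact ⟨S', .head hmove hpath, hinj, hk'⟩

lemma fill {ι : Type w} [Finite ι] [Nonempty ι] {G : SimpleGraph V} (hG : G.Connected) (v : V)
    (S : ι → V) (hS : Function.Injective S) :
    ∃ S', PebblePath G S S' ∧ Function.Injective S' ∧ ∃ k, S' k = v := by
  obtain ⟨i, hi⟩ := Finite.exists_min (fun j => G.dist (S j) v)
  exact fill' hG v _ S hS i le_rfl hi

lemma empty' {ι : Type w} [Finite ι] {G : SimpleGraph V} (hG : G.Connected) (v : V) :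
    ∀ (d : ℕ) (S : ι → V), Function.Injective S →
      (∃ u, u ∉ Set.range S ∧ G.dist v u ≤ d) →
      ∃ S', PebblePath G S S' ∧ Function.Injective S' ∧ v ∉ Set.range S' := by
  classical
  intro d
  induction d with
  | zero =>
    rintro S hS ⟨u, hu, hd⟩
    have hv : u = v := (hG.dist_eq_zero_iff.mp (Nat.le_zero.mp hd)).symm
    exact ⟨S, .refl, hS, hv ▸ hu⟩
  | succ d ih =>
    rintro S hS ⟨u, hu, hd⟩
    by_cases hv : v ∈ Set.range S
    · have hne : G.dist v u ≠ 0 := fun h0 => hu (hG.dist_eq_zero_iff.mp h0 ▸ hv)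
      obtain ⟨k, hk⟩ : ∃ k, G.dist v u = k + 1 := ⟨_, (Nat.succ_pred_eq_of_pos (Nat.pos_of_ne_zero hne)).symm⟩
      have hk' : G.dist u v = k + 1 := by rw [SimpleGraph.dist_comm]; exact hk
      obtain ⟨c, hadj, hc⟩ := exists_adj_dist hG hk'
      have hvc : G.dist v c = k := by rw [SimpleGraph.dist_comm]; exact hc
      by_cases hcr : c ∈ Set.range S
      · obtain ⟨j, hj⟩ := hcr
        have hmove := pebbleMove_update hS (show G.Adj (S j) u from hj ▸ hadj.symm) hu
        have hcS₂ : c ∉ Set.range (Function.update S j u) := by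
          rintro ⟨j', hj'⟩
          rcases eq_or_ne j' j with rfl | hjj
          · rw [Function.update_self] at hj'
            exact hadj.ne' (hj'.symm)
          · rw [Function.update_of_ne hjj] at hj'
            exact hjj (hS (hj'.trans hj.symm))
        obtain ⟨S', hpath, hinj, hfin⟩ := ih (Function.update S j u) hmove.2.1
          ⟨c, hcS₂, by omega⟩
        exact ⟨S', .head hmove hpath, hinj, hfin⟩
      · exact ih S hS ⟨c, hcr, by omega⟩
    · exact ⟨S, .refl, hS, hv⟩

lemma induce_connected [Finite V] {G : SimpleGraph V} (hG : G.Connected) (hV : Nontrivial V) :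
    ∃ v : V, (G.comap (Subtype.val : {w : V // w ≠ v} → V)).Connected := by
  obtain ⟨u⟩ := hG.nonempty
  obtain ⟨v, hv⟩ := Finite.exists_max (fun w => G.dist u w)
  have huv : u ≠ v := by
    rintro rfl
    have hall : ∀ a : V, a = u := fun a =>
      (hG.dist_eq_zero_iff.mp (by have := hv a; simpa [SimpleGraph.dist_self] using this)).symm
    obtain ⟨a, b, hab⟩ := hV
    exact hab ((hall a).trans (hall b).symm)
  have key : ∀ (n : ℕ) (w : V) (hw : w ≠ v), G.dist u w = n →
      (G.comap (Subtype.val : {w : V // w ≠ v} → V)).Reachable ⟨u, huv⟩ ⟨w, hw⟩ := by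
    intro n
    induction n with
    | zero =>
      intro w hw h
      have : u = w := hG.dist_eq_zero_iff.mp h
      subst this
      exact SimpleGraph.Reachable.refl _
    | succ n ih =>
      intro w hw h
      have h' : G.dist w u = n + 1 := by rw [SimpleGraph.dist_comm]; exact h
      obtain ⟨c, hadj, hc⟩ := exists_adj_dist hG h'
      have hcu : G.dist u c = n := by rw [SimpleGraph.dist_comm]; exact hc
      have hcv : c ≠ v := by
        rintro rfl
        have := hv w
        omega
      exact (ih c hcv hcu).trans
        ((show (G.comap (Subtype.val : {w : V // w ≠ v} → V)).Adj ⟨c, hcv⟩ ⟨w, hw⟩ from hadj.symm).reachable)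
  refine ⟨v, ?_⟩
  haveI : Nonempty {w : V // w ≠ v} := ⟨⟨u, huv⟩⟩
  exact ⟨fun a b => ((key _ a.1 a.2 rfl).symm.trans (key _ b.1 b.2 rfl))⟩

def extFun {ι : Type w} [DecidableEq ι] (j₀ : ι) (v : V)
    (A : {j : ι // j ≠ j₀} → {w : V // w ≠ v}) : ι → V :=
  fun j => if hj : j = j₀ then v else (A ⟨j, hj⟩).1

lemma liftPath_val {ι : Type w} {p : V → Prop} {G : SimpleGraph V}
    {A B : ι → Subtype p} (h : PebblePath (G.comap (Subtype.val : Subtype p → V)) A B) :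
    PebblePath G (Subtype.val ∘ A) (Subtype.val ∘ B) := by
  refine Relation.ReflTransGen.lift (fun X : ι → Subtype p => Subtype.val ∘ X) ?_ _ _ h
  rintro P Q ⟨hP, hQ, i, hadj, hfix⟩
  exact ⟨Subtype.val_injective.comp hP, Subtype.val_injective.comp hQ, i, hadj,
    fun j hj => congrArg Subtype.val (hfix j hj)⟩

lemma liftPath_ext {ι : Type w} [DecidableEq ι] {v : V} {G : SimpleGraph V} (j₀ : ι)
    {A B : {j : ι // j ≠ j₀} → {w : V // w ≠ v}}
    (h : PebblePath (G.comap (Subtype.val : {w : V // w ≠ v} → V)) A B) :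
    PebblePath G (extFun j₀ v A) (extFun j₀ v B) := by
  refine Relation.ReflTransGen.lift (extFun j₀ v) ?_ _ _ h
  rintro P Q ⟨hP, hQ, i, hadj, hfix⟩
  have hinj : ∀ (C : {j : ι // j ≠ j₀} → {w : V // w ≠ v}), Function.Injective C →
      Function.Injective (extFun j₀ v C) := by
    intro C hC a b hab
    unfold extFun at hab
    by_cases ha : a = j₀ <;> by_cases hb : b = j₀
    · exact ha.trans hb.symm
    · rw [dif_pos ha, dif_neg hb] at hab
      exact absurd hab.symm (C ⟨b, hb⟩).2
    · rw [dif_neg ha, dif_pos hb] at hab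
      exact absurd hab (C ⟨a, ha⟩).2
    · rw [dif_neg ha, dif_neg hb] at hab
      exact congrArg Subtype.val (hC (Subtype.ext hab))
  refine ⟨hinj P hP, hinj Q hQ, i.1, ?_, ?_⟩
  · show G.Adj (extFun j₀ v P i.1) (extFun j₀ v Q i.1)
    unfold extFun
    rw [dif_neg i.2, dif_neg i.2]
    exact hadj
  · intro j hj
    unfold extFun
    by_cases hjj : j = j₀
    · rw [dif_pos hjj, dif_pos hjj]
    · rw [dif_neg hjj, dif_neg hjj]
      exact congrArg Subtype.val (hfix ⟨j, hjj⟩ (fun he => hj (congrArg Subtype.val he)))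

end Aux


universe u' w'

lemma pebble_canon : ∀ (n : ℕ) (V : Type u') [Finite V] (G : SimpleGraph V),
    Nat.card V ≤ n → G.Connected → ∀ (ι : Type w') [Finite ι] (S T : ι → V),
    Function.Injective S → Function.Injective T →
    ∃ σ : Equiv.Perm ι, PebblePath G S (T ∘ σ) := by
  intro n
  induction n with
  | zero =>
    intro V _ G hcard hG ι _ S T hS hT
    have h0 : Nat.card V = 0 := Nat.le_zero.mp hcard
    have hemp : IsEmpty V := (Nat.card_eq_zero.mp h0).resolve_right (fun h => h.not_finite ‹_›)
    obtain ⟨x⟩ := hG.nonempty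
    exact (hemp.false x).elim
  | succ n ih =>
    intro V _ G hcard hG ι _ S T hS hT
    classical
    rcases subsingleton_or_nontrivial V with hV | hV
    · refine ⟨1, ?_⟩
      have hST : S = T ∘ ⇑(1 : Equiv.Perm ι) := funext fun x => Subsingleton.elim _ _
      exact hST ▸ Relation.ReflTransGen.refl
    · obtain ⟨v, hconn'⟩ := induce_connected hG hV
      have hlt : Nat.card {w : V // w ≠ v} < Nat.card V := by
        haveI := Fintype.ofFinite V
        rw [Nat.card_eq_fintype_card, Nat.card_eq_fintype_card]
        exact Fintype.card_subtype_lt (x := v) (by simp)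
      have hcard' : Nat.card {w : V // w ≠ v} ≤ n := by omega
      by_cases hvT : v ∈ Set.range T
      · obtain ⟨i₀, hi₀⟩ := hvT
        haveI : Nonempty ι := ⟨i₀⟩
        obtain ⟨S', hp1, hS', j₀, hj₀⟩ := fill hG v S hS
        set T' : ι → V := T ∘ (Equiv.swap i₀ j₀) with hT'def
        have hT'inj : Function.Injective T' := hT.comp (Equiv.injective _)
        have hT'j₀ : T' j₀ = v := by
          simp only [hT'def, Function.comp_apply, Equiv.swap_apply_right]
          exact hi₀
        have hSne : ∀ j : {j : ι // j ≠ j₀}, S' j.1 ≠ v :=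
          fun j h => j.2 (hS' (h.trans hj₀.symm))
        have hTne : ∀ j : {j : ι // j ≠ j₀}, T' j.1 ≠ v :=
          fun j h => j.2 (hT'inj (h.trans hT'j₀.symm))
        obtain ⟨ρ, hρ⟩ := ih {w : V // w ≠ v}
          (G.comap (Subtype.val : {w : V // w ≠ v} → V)) hcard' hconn' {j : ι // j ≠ j₀}
          (fun j => ⟨S' j.1, hSne j⟩) (fun j => ⟨T' j.1, hTne j⟩)
          (fun a b h => Subtype.ext (hS' (congrArg Subtype.val h)))
          (fun a b h => Subtype.ext (hT'inj (congrArg Subtype.val h)))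
        have hlift := liftPath_ext j₀ hρ
        have e1 : extFun j₀ v (fun j : {j : ι // j ≠ j₀} => (⟨S' j.1, hSne j⟩ : {w : V // w ≠ v})) = S' := by
          funext j
          unfold extFun
          by_cases hj : j = j₀
          · rw [dif_pos hj, hj, hj₀]
          · rw [dif_neg hj]
        have e2 : extFun j₀ v ((fun j : {j : ι // j ≠ j₀} => (⟨T' j.1, hTne j⟩ : {w : V // w ≠ v})) ∘ ρ)
            = T' ∘ (Equiv.Perm.ofSubtype ρ) := by
          funext j
          unfold extFun
          by_cases hj : j = j₀
          · rw [dif_pos hj, hj, Function.comp_apply,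
              Equiv.Perm.ofSubtype_apply_of_not_mem ρ (not_not_intro rfl), hT'j₀]
          · rw [dif_neg hj]
            simp only [Function.comp_apply, Equiv.Perm.ofSubtype_apply_of_mem ρ hj]
        rw [e1, e2] at hlift
        refine ⟨Equiv.swap i₀ j₀ * Equiv.Perm.ofSubtype ρ, ?_⟩
        have hfin : T ∘ ⇑(Equiv.swap i₀ j₀ * Equiv.Perm.ofSubtype ρ) = T' ∘ ⇑(Equiv.Perm.ofSubtype ρ) := by
          funext j
          simp [hT'def, Equiv.Perm.mul_apply]
        rw [hfin]
        exact hp1.trans hlift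
      · have hcardι : Nat.card ι < Nat.card V := by
          have : Nat.card ι ≤ Nat.card {w : V // w ≠ v} :=
            Nat.card_le_card_of_injective
              (fun i => (⟨T i, fun h => hvT ⟨i, h⟩⟩ : {w : V // w ≠ v}))
              (fun a b h => hT (congrArg Subtype.val h))
          omega
        have hfree : ∃ u, u ∉ Set.range S := by
          by_contra h
          push_neg at h
          have hsurj : Function.Surjective S := fun u => h u
          have := Nat.card_le_card_of_surjective S hsurj
          omega
        obtain ⟨u, hu⟩ := hfree
        obtain ⟨S', hp1, hS', hvS'⟩ := empty' hG v (G.dist v u) S hS ⟨u, hu, le_rfl⟩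
        obtain ⟨ρ, hρ⟩ := ih {w : V // w ≠ v}
          (G.comap (Subtype.val : {w : V // w ≠ v} → V)) hcard' hconn' ι
          (fun i => ⟨S' i, fun h => hvS' ⟨i, h⟩⟩) (fun i => ⟨T i, fun h => hvT ⟨i, h⟩⟩)
          (fun a b h => hS' (congrArg Subtype.val h))
          (fun a b h => hT (congrArg Subtype.val h))
        refine ⟨ρ, hp1.trans ?_⟩
        exact liftPath_val hρ


/-- On a finite connected graph, any two placements of `m` pebbles are connected
by a pebble path, up to a permutation of the pebbles. -/
theorem pebblePath_of_connected {V : Type*} [Fintype V] (G : SimpleGraph V)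
    (hG : G.Connected) {m : ℕ} (S T : Fin m → V)
    (hS : Function.Injective S) (hT : Function.Injective T) :
    ∃ σ : Equiv.Perm (Fin m), PebblePath G S (T ∘ σ) := by
  exact pebble_canon (Nat.card V) V G le_rfl hG (Fin m) S T hS hT
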